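/- (Proposition 1, eDT-I part.) Let α, β ∈ A₁, and assume the linear-problem data at p₁: p₁ ∈ A₀ is invertible with Dp₁ = 0; f₁, g₁ ∈ A₀ with f₁ invertible and σ₁ ∈ A₁ satisfy Df₁ = αg₁, Dg₁ = βf₁ + p₁σ₁, Dσ₁ = p₁g₁; set y₁ = g₁f₁⁻¹ and Ω₁ = σ₁f₁⁻¹. Define β₁ = p₁⁻¹Ω₁ and α₁ = −α_x(1 + αβ₁) + α((Dα)(Dβ₁) − p₁²). Then the second Bäcklund relation β₁,ₓ = β(1 − αβ₁) − β₁((Dα)(Dβ₁) − p₁²) holds automatically, and consequently W₁ := E₁(λ, p₁; α, β₁) satisfies (DW₁) + W₁†·L(λ; α, β) − L(λ; α₁, β₁)·W₁ = 0 identically in λ; i.e. Ψ ↦ W₁Ψ is a Darboux transformation of the linear problem DΨ = L(λ; α, β)Ψ. -/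

import Mathlib

open Polynomial Matrix

/-- A supercommutative superalgebra `A = A₀ ⊕ A₁` over `ℂ`. -/
structure SuperAlgebra (A : Type*) [Ring A] [Algebra ℂ A] where
  A0 : Submodule ℂ A
  A1 : Submodule ℂ A
  isCompl : IsCompl A0 A1
  algebraMap_mem : ∀ c : ℂ, algebraMap ℂ A c ∈ A0
  mul_mem00 : ∀ {a b : A}, a ∈ A0 → b ∈ A0 → a * b ∈ A0
  mul_mem01 : ∀ {a b : A}, a ∈ A0 → b ∈ A1 → a * b ∈ A1
  mul_mem10 : ∀ {a b : A}, a ∈ A1 → b ∈ A0 → a * b ∈ A1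
  mul_mem11 : ∀ {a b : A}, a ∈ A1 → b ∈ A1 → a * b ∈ A0
  even_comm : ∀ {a : A}, a ∈ A0 → ∀ b : A, a * b = b * a
  odd_anticomm : ∀ {a b : A}, a ∈ A1 → b ∈ A1 → a * b = -(b * a)

/-- An odd superderivation `D` on a superalgebra: `D(ab) = (Da)b + a†(Db)`. -/
structure OddDerivation {A : Type*} [Ring A] [Algebra ℂ A] (S : SuperAlgebra A) where
  D : A →ₗ[ℂ] A
  map_even : ∀ {a : A}, a ∈ S.A0 → D a ∈ S.A1
  map_odd : ∀ {a : A}, a ∈ S.A1 → D a ∈ S.A0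
  leibniz_even : ∀ {a : A}, a ∈ S.A0 → ∀ b : A, D (a * b) = D a * b + a * D b
  leibniz_odd : ∀ {a : A}, a ∈ S.A1 → ∀ b : A, D (a * b) = D a * b - a * D b

/-- An even (parity preserving) `ℂ`-linear derivation on a superalgebra. -/
structure EvenDerivation {A : Type*} [Ring A] [Algebra ℂ A] (S : SuperAlgebra A) where
  D : A →ₗ[ℂ] A
  map_even : ∀ {a : A}, a ∈ S.A0 → D a ∈ S.A0
  map_odd : ∀ {a : A}, a ∈ S.A1 → D a ∈ S.A1
  leibniz : ∀ a b : A, D (a * b) = D a * b + a * D b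

/-- Apply a map coefficientwise to a polynomial (extension of a derivation to
polynomials in the central even indeterminate `λ = X`). -/
noncomputable def cwise {A : Type*} [Ring A] (f : A → A) (P : Polynomial A) : Polynomial A :=
  P.sum fun n a => Polynomial.monomial n (f a)

/-- The entrywise super-parity involution `M ↦ M†` for `3 × 3` matrices having the
standard parity pattern (even entries at `(1,1), (1,2), (2,1), (2,2), (3,3)`; odd entries
at `(1,3), (2,3), (3,1), (3,2)`): it negates exactly the odd positions. -/
def sdag {R : Type*} [Ring R] (M : Matrix (Fin 3) (Fin 3) R) : Matrix (Fin 3) (Fin 3) R :=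
  Matrix.of fun i j => if (i = 2 ∧ j ≠ 2) ∨ (i ≠ 2 ∧ j = 2) then -M i j else M i j

/-- The SUSY AKNS spectral matrix `L(λ; α, β)`, with rows `[0, α, 0], [β, 0, λ], [0, λ, 0]`. -/
def Lgen {R : Type*} [Ring R] (lam a b : R) : Matrix (Fin 3) (Fin 3) R :=
  !![0, a, 0; b, 0, lam; 0, lam, 0]

/-- `L(λ; α, β)` with entries polynomial in the indeterminate `λ = X`. -/
noncomputable def Lpoly {A : Type*} [Ring A] (a b : A) : Matrix (Fin 3) (Fin 3) (Polynomial A) :=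
  Lgen (X : Polynomial A) (C a) (C b)

/-- The elementary Darboux matrix `E₁(λ, p; a, b)` (the gauge matrix of eDT-I), with
`da, db` standing for `Da, Db`. -/
def E1gen {R : Type*} [Ring R] (lam p a b da db : R) : Matrix (Fin 3) (Fin 3) R :=
  !![lam ^ 2 + (1 + a * b) * (da * db - p ^ 2), -da, lam * a;
     -db, 1 - a * b, 0;
     -(lam * b), 0, 1]

/-- The elementary Darboux matrix `E₂(λ, p; a, b)` (the gauge matrix of eDT-II). -/
def E2gen {R : Type*} [Ring R] (lam p a b da db : R) : Matrix (Fin 3) (Fin 3) R :=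
  !![1 - a * b, da, -(lam * a);
     db, (1 + a * b) * (lam ^ 2 - p ^ 2 + da * db), -(lam * (a * db));
     lam * b, lam * (b * da), lam ^ 2 * (1 + a * b) - p ^ 2]

/-- `E₁(λ, p; a, b)` with entries polynomial in `λ = X`. -/
noncomputable def E1poly {A : Type*} [Ring A] (D : A → A) (p a b : A) :
    Matrix (Fin 3) (Fin 3) (Polynomial A) :=
  E1gen (X : Polynomial A) (C p) (C a) (C b) (C (D a)) (C (D b))

/-- `E₂(λ, p; a, b)` with entries polynomial in `λ = X`. -/
noncomputable def E2poly {A : Type*} [Ring A] (D : A → A) (p a b : A) :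
    Matrix (Fin 3) (Fin 3) (Polynomial A) :=
  E2gen (X : Polynomial A) (C p) (C a) (C b) (C (D a)) (C (D b))

section AuxScalar
variable {R : Type*} [Ring R] (a b c y p da db dy dd ax a1 Du Dw : R)

lemma gs3 (hp : ∀ x, p*x = x*p) (hy : ∀ x, y*x = x*y) (hda : ∀ x, da*x = x*da)
 (hdb : ∀ x, db*x = x*db)
 (haa : a*a = 0) (hbb : b*b = 0) (hab : a*b = -(b*a)) (hac : a*c = -(c*a)) (hbc : b*c = -(c*b))
 (G1 : db = y - a*(b*y))
 (G2 : dy = c + p*(p*b) - a*(y*y))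
 (G3 : dd = dy - da*(b*y) + a*(db*y - b*dy)) :
 dd = c*(1-a*b) - b*(da*db - p^2) := by
  linear_combination (norm := noncomm_ring) G3 + G2 + a * G1 * y - (a*b) * G2
    + (b*da) * G1 + p * hp b + hp b * p
    - (hda b) * y - haa * (b*(y*y)) - b * hda (a*(b*y)) - hab * (b*(y*da)) + a * hbb * (y*da)
    - a * hbc + hac * b
    - a * (b * hp (p*b)) - a * (b * ((hp b) * p)) - a * (hbb * (p*p))
    + hab * (a*(y*y)) - b * haa * (y*y)

lemma gsC2 (hp : ∀ x, p*x = x*p) (hda : ∀ x, da*x = x*da) (hdb : ∀ x, db*x = x*db)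
 (haa : a*a = 0) (hbb : b*b = 0) (hab : a*b = -(b*a))
 (Ga1 : a1 = -ax*(1+a*b) + a*(da*db - p^2)) :
 -ax + ((1 + a*b) * (da*db - p^2)) * a - a1 * (1 - a * b) = 0 := by
  linear_combination (norm := noncomm_ring) -(Ga1 * (1 - a*b))
    + da*(hdb a) + (hda a)*db
    - p*(hp a) - (hp a)*p
    + (a*b*da)*(hdb a) + (a*b)*((hda a)*db) + hab*(a*(da*db)) - b*(haa*(da*db))
    - (a*b*p)*(hp a) - (a*b)*((hp a)*p) - hab*(a*(p*p)) + b*(haa*(p*p))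
    - ax*(hab*(a*b)) + ax*(b*(haa*b))
    + a*da*(hdb (a*b)) + a*(hda (a*b))*db + haa*(b*(da*db))
    - a*p*(hp (a*b)) - a*(hp (a*b))*p - haa*(b*(p*p))

lemma gsC4 (hp : ∀ x, p*x = x*p) (hda : ∀ x, da*x = x*da) (hdb : ∀ x, db*x = x*db)
 (haa : a*a = 0) (hbb : b*b = 0) (hab : a*b = -(b*a)) (hac : a*c = -(c*a)) (hbc : b*c = -(c*b))
 (C3 : dd = c*(1-a*b) - b*(da*db - p^2)) :
 -dd + (1 - a * b) * c - b * ((1 + a*b) * (da*db - p^2)) = 0 := by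
  linear_combination (norm := noncomm_ring) -C3 - a*hbc + hac*b
    + a*hbb*(da*db - p^2) - hab*(b*(da*db - p^2))

lemma gsC5 (hda : ∀ x, da*x = x*da) (hdb : ∀ x, db*x = x*db)
 (GDw : Dw = a*db - da*b) :
 Dw - db * a + b * da = 0 := by
  linear_combination (norm := noncomm_ring) GDw - hdb a - hda b

lemma gsC1 (hp : ∀ x, p*x = x*p) (hda : ∀ x, da*x = x*da) (hdb : ∀ x, db*x = x*db)
 (haa : a*a = 0) (hbb : b*b = 0) (hab : a*b = -(b*a)) (hac : a*c = -(c*a)) (hbc : b*c = -(c*b))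
 (haax : a*ax = -(ax*a)) (hbax : b*ax = -(ax*b))
 (Ga1 : a1 = -ax*(1+a*b) + a*(da*db - p^2))
 (GDu : Du = (da*b - a*db)*(da*db - p^2) + (1+a*b)*(ax*db + da*dd))
 (C3 : dd = c*(1-a*b) - b*(da*db - p^2)) :
 Du = da * c - a1 * db := by
  linear_combination (norm := noncomm_ring) GDu + Ga1 * db + (1+a*b)*da*C3
    - a*(hdb (da*db)) + a*(hdb (p*p))
    + a*hbax*db - haax*(b*db)
    - (hda (a*b))*c + da*(a*hbc) - da*(hac*b)
    + a*(hda b)*(c*(a*b)) + (hda a)*(b*(c*(a*b)))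
    - da*(a*hbc*(a*b)) + da*(hac*b*(a*b)) - da*(c*(hab*(a*b))) + da*(c*(b*(haa*b)))
    - a*b*(hda b)*(da*db - p^2) - a*(hbb*(da*(da*db - p^2)))

lemma darboux_matrix (t p a b c a1 da db Du ax bx Dw : R)
    (ht : ∀ x : R, t * x = x * t)
    (C1 : Du = da * c - a1 * db)
    (C2 : -ax + ((1 + a*b) * (da*db - p^2)) * a - a1 * (1 - a * b) = 0)
    (C4 : -bx + (1 - a * b) * c - b * ((1 + a*b) * (da*db - p^2)) = 0)
    (C5 : Dw - db * a + b * da = 0)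
    (C6 : a * b + b * a = 0) :
    !![Du, -ax, da * t; -bx, Dw, 0; (-db) * t, 0, 0]
      + sdag (E1gen t p a b da db) * Lgen t a c
      - Lgen t a1 b * E1gen t p a b da db = 0 := by
  ext i j
  fin_cases i <;> fin_cases j <;>
    simp [E1gen, Lgen, sdag, Matrix.mul_apply, Fin.sum_univ_three,
      Matrix.vecHead, Matrix.vecTail]
  · linear_combination (norm := noncomm_ring) C1
  · linear_combination (norm := noncomm_ring) C2 + t * ht a
  · linear_combination (norm := noncomm_ring) C4 + t * ht b + ht b * t
  · linear_combination (norm := noncomm_ring) C5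
  · linear_combination (norm := noncomm_ring) (-(b * ht a) - C6 * t)
  · linear_combination (norm := noncomm_ring) ht db
  · linear_combination (norm := noncomm_ring) t * C6
end AuxScalar

section AuxCwise
variable {A : Type*} [Ring A] {f : A → A}

lemma cwise_C (hf0 : f 0 = 0) (a : A) : cwise f (C a) = C (f a) := by
  rw [cwise, Polynomial.sum_C_index (by simp [hf0])]
  exact Polynomial.monomial_zero_left (R := A) (a := f a)

lemma cwise_monomial (hf0 : f 0 = 0) (n : ℕ) (a : A) :
    cwise f (monomial n a) = monomial n (f a) := by
  rw [cwise, Polynomial.sum_monomial_index _ _ (by simp [hf0])]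

lemma cwise_zero : cwise f (0 : Polynomial A) = 0 := Polynomial.sum_zero_index _

lemma cwise_add (hf0 : f 0 = 0) (hfadd : ∀ x y, f (x + y) = f x + f y) (P Q : Polynomial A) :
    cwise f (P + Q) = cwise f P + cwise f Q := by
  rw [cwise, cwise, cwise]
  exact Polynomial.sum_add_index _ _ _ (by simp [hf0]) (by simp [hfadd])

lemma E1map (hf0 : f 0 = 0) (hf1 : f 1 = 0) (hfadd : ∀ x y, f (x + y) = f x + f y)
    (hfneg : ∀ x : A, f (-x) = -(f x)) (p a b da db : A) :
    (E1gen (X : Polynomial A) (C p) (C a) (C b) (C da) (C db)).map (cwise f) =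
      !![C (f ((1 + a * b) * (da * db - p ^ 2))), -(C (f da)), C (f a) * X;
         -(C (f db)), C (f (1 - a * b)), 0;
         -(C (f b)) * X, 0, 0] := by
  refine Matrix.ext fun i j => ?_
  fin_cases i <;> fin_cases j <;> simp [E1gen, Matrix.map_apply]
  · rw [show ((1 : Polynomial A) + C a * C b) * (C da * C db - C p ^ 2)
        = C ((1 + a * b) * (da * db - p ^ 2)) from by simp,
      cwise_add hf0 hfadd, cwise_C hf0, X_pow_eq_monomial, cwise_monomial hf0]
    simp [hf1]
  · rw [← map_neg C, cwise_C hf0, hfneg, map_neg]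
  · rw [C_mul_X_eq_monomial, cwise_monomial hf0, ← C_mul_X_eq_monomial]
  · rw [← map_neg C, cwise_C hf0, hfneg, map_neg]
  · rw [show (1 : Polynomial A) - C a * C b = C (1 - a * b) from by simp, cwise_C hf0]
  · exact cwise_zero
  · rw [C_mul_X_eq_monomial, ← map_neg (monomial 1), cwise_monomial hf0, hfneg,
      map_neg (monomial 1), C_mul_X_eq_monomial]
  · exact cwise_zero
  · show cwise f 1 = 0
    rw [← _root_.map_one C, cwise_C hf0, hf1, _root_.map_zero]
end AuxCwise

section AuxSuper
variable {A : Type*} [Ring A] [Algebra ℂ A]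

lemma superalg_one_mem (S : SuperAlgebra A) : (1 : A) ∈ S.A0 := by
  simpa using S.algebraMap_mem 1

lemma superalg_odd_sq (S : SuperAlgebra A) {x : A} (hx : x ∈ S.A1) : x * x = 0 := by
  have h := S.odd_anticomm hx hx
  have h2 : (2:ℂ) • (x*x) = 0 := by
    rw [two_smul]; nth_rewrite 1 [h]; exact neg_add_cancel _
  calc x*x = ((2:ℂ)⁻¹ * 2) • (x*x) := by norm_num
    _ = (2:ℂ)⁻¹ • ((2:ℂ) • (x*x)) := (smul_smul _ _ _).symm
    _ = 0 := by rw [h2, smul_zero]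

lemma superalg_inv_mem0 (S : SuperAlgebra A) {u v : A} (hu : u ∈ S.A0)
    (huv : u * v = 1) (hvu : v * u = 1) : v ∈ S.A0 := by
  obtain ⟨e, he, z, hz, hv⟩ := Submodule.mem_sup.mp
    (show v ∈ S.A0 ⊔ S.A1 by rw [S.isCompl.sup_eq_top]; exact Submodule.mem_top)
  have hh : u*e + u*z = 1 := by rw [← mul_add, hv, huv]
  have hz0' : u * z ∈ S.A0 := by
    rw [show u*z = 1 - u*e from by linear_combination (norm := noncomm_ring) hh]
    exact Submodule.sub_mem _ (superalg_one_mem S) (S.mul_mem00 hu he)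
  have hz00 : u * z = 0 :=
    Submodule.disjoint_def.mp S.isCompl.disjoint _ hz0' (S.mul_mem01 hu hz)
  have hzz : z = 0 := by
    calc z = (v*u)*z := by rw [hvu, one_mul]
      _ = v*(u*z) := by rw [mul_assoc]
      _ = 0 := by rw [hz00, mul_zero]
  rw [← hv, hzz, add_zero]; exact he
end AuxSuper

/-- **Proposition 1, eDT-I part.** With `β₁ = p₁⁻¹Ω₁` and
`α₁ = −α_x(1 + αβ₁) + α((Dα)(Dβ₁) − p₁²)` built from a solution of the linear problem at
`λ = p₁`, the second Bäcklund relation `β₁,ₓ = β(1 − αβ₁) − β₁((Dα)(Dβ₁) − p₁²)` holds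
automatically, and `W₁ = E₁(λ, p₁; α, β₁)` satisfies the Darboux covariance condition
`(DW₁) + W₁†·L(λ; α, β) − L(λ; α₁, β₁)·W₁ = 0` identically in `λ`. -/
theorem eDT1_is_darboux {A : Type*} [Ring A] [Algebra ℂ A]
    (S : SuperAlgebra A) (𝒟 : OddDerivation S)
    (α β : A) (hα : α ∈ S.A1) (hβ : β ∈ S.A1)
    (p₁ p1inv : A) (hp₁ : p₁ ∈ S.A0) (hDp₁ : 𝒟.D p₁ = 0)
    (hp1inv : p₁ * p1inv = 1 ∧ p1inv * p₁ = 1)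
    (f₁ g₁ σ₁ : A) (hf₁ : f₁ ∈ S.A0) (hg₁ : g₁ ∈ S.A0) (hσ₁ : σ₁ ∈ S.A1)
    (f1inv : A) (hf1inv : f₁ * f1inv = 1 ∧ f1inv * f₁ = 1)
    (hDf₁ : 𝒟.D f₁ = α * g₁) (hDg₁ : 𝒟.D g₁ = β * f₁ + p₁ * σ₁) (hDσ₁ : 𝒟.D σ₁ = p₁ * g₁)
    (y₁ Ω₁ β₁ α₁ : A) (hy₁ : y₁ = g₁ * f1inv) (hΩ₁ : Ω₁ = σ₁ * f1inv)
    (hβ₁ : β₁ = p1inv * Ω₁)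
    (hα₁ : α₁ = -(𝒟.D (𝒟.D α)) * (1 + α * β₁) + α * ((𝒟.D α) * (𝒟.D β₁) - p₁ ^ 2)) :
    (𝒟.D (𝒟.D β₁) = β * (1 - α * β₁) - β₁ * ((𝒟.D α) * (𝒟.D β₁) - p₁ ^ 2))
      ∧ ((E1poly (fun x => 𝒟.D x) p₁ α β₁).map (cwise fun x => 𝒟.D x)
          + sdag (E1poly (fun x => 𝒟.D x) p₁ α β₁) * Lpoly α β
          - Lpoly α₁ β₁ * E1poly (fun x => 𝒟.D x) p₁ α β₁ = 0) := by
  obtain ⟨hpi1, hpi2⟩ := hp1inv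
  obtain ⟨hfi1, hfi2⟩ := hf1inv
  have h1mem : (1:A) ∈ S.A0 := superalg_one_mem S
  have hp1inv0 : p1inv ∈ S.A0 := superalg_inv_mem0 S hp₁ hpi1 hpi2
  have hf1inv0 : f1inv ∈ S.A0 := superalg_inv_mem0 S hf₁ hfi1 hfi2
  have hβ₁1 : β₁ ∈ S.A1 := by
    rw [hβ₁, hΩ₁]; exact S.mul_mem01 hp1inv0 (S.mul_mem10 hσ₁ hf1inv0)
  have hy0 : y₁ ∈ S.A0 := by rw [hy₁]; exact S.mul_mem00 hg₁ hf1inv0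
  have hda0 : 𝒟.D α ∈ S.A0 := 𝒟.map_odd hα
  have hdb0 : 𝒟.D β₁ ∈ S.A0 := 𝒟.map_odd hβ₁1
  have hax1 : 𝒟.D (𝒟.D α) ∈ S.A1 := 𝒟.map_even hda0
  have cp : ∀ x, p₁ * x = x * p₁ := fun x => S.even_comm hp₁ x
  have cy : ∀ x, y₁ * x = x * y₁ := fun x => S.even_comm hy0 x
  have cda : ∀ x, 𝒟.D α * x = x * 𝒟.D α := fun x => S.even_comm hda0 x
  have cdb : ∀ x, 𝒟.D β₁ * x = x * 𝒟.D β₁ := fun x => S.even_comm hdb0 x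
  have cpi : ∀ x, p1inv * x = x * p1inv := fun x => S.even_comm hp1inv0 x
  have cfi : ∀ x, f1inv * x = x * f1inv := fun x => S.even_comm hf1inv0 x
  have cg : ∀ x, g₁ * x = x * g₁ := fun x => S.even_comm hg₁ x
  have haa : α * α = 0 := superalg_odd_sq S hα
  have hbb : β₁ * β₁ = 0 := superalg_odd_sq S hβ₁1
  have hab : α * β₁ = -(β₁ * α) := S.odd_anticomm hα hβ₁1
  have hacβ : α * β = -(β * α) := S.odd_anticomm hα hβ
  have hbcβ : β₁ * β = -(β * β₁) := S.odd_anticomm hβ₁1 hβ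
  have haax : α * 𝒟.D (𝒟.D α) = -(𝒟.D (𝒟.D α) * α) := S.odd_anticomm hα hax1
  have hbax : β₁ * 𝒟.D (𝒟.D α) = -(𝒟.D (𝒟.D α) * β₁) := S.odd_anticomm hβ₁1 hax1
  have hsa : σ₁ * α = -(α * σ₁) := S.odd_anticomm hσ₁ hα
  -- derivation facts
  have hD1 : 𝒟.D 1 = 0 := by
    have h := 𝒟.leibniz_even h1mem 1
    rw [one_mul, mul_one, one_mul] at h
    nth_rewrite 1 [← add_zero (𝒟.D 1)] at h
    exact (add_left_cancel h).symm
  have hDpi : 𝒟.D p1inv = 0 := by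
    have h := 𝒟.leibniz_even hp1inv0 p₁
    rw [hpi2, hD1, hDp₁, mul_zero, add_zero] at h
    calc 𝒟.D p1inv = 𝒟.D p1inv * (p₁ * p1inv) := by rw [hpi1, mul_one]
      _ = (𝒟.D p1inv * p₁) * p1inv := by rw [mul_assoc]
      _ = 0 := by rw [← h, zero_mul]
  have hDfi : 𝒟.D f1inv = -(f1inv * ((α * g₁) * f1inv)) := by
    have h := 𝒟.leibniz_even hf1inv0 f₁
    rw [hfi2, hD1, hDf₁] at h
    have h2 : 𝒟.D f1inv * f₁ = -(f1inv * (α * g₁)) := by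
      linear_combination (norm := noncomm_ring) -h
    calc 𝒟.D f1inv = (𝒟.D f1inv * f₁) * f1inv := by rw [mul_assoc, hfi1, mul_one]
      _ = -(f1inv * ((α * g₁) * f1inv)) := by rw [h2]; noncomm_ring
  have G1A : 𝒟.D β₁ = y₁ - α * (β₁ * y₁) := by
    have hσf := 𝒟.leibniz_odd hσ₁ f1inv
    rw [hDσ₁, hDfi] at hσf
    have h := 𝒟.leibniz_even hp1inv0 (σ₁ * f1inv)
    rw [hDpi, zero_mul, zero_add, hσf] at h
    rw [show β₁ = p1inv * (σ₁ * f1inv) from by rw [hβ₁, hΩ₁], h, hy₁]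
    linear_combination (norm := noncomm_ring) hpi2 * (g₁*f1inv)
      + p1inv*σ₁*(cfi α)*(g₁*f1inv) + p1inv*hsa*(f1inv*(g₁*f1inv))
      - (cpi α)*(σ₁*(f1inv*(g₁*f1inv)))
  have G2A : 𝒟.D y₁ = β + p₁ * (p₁ * β₁) - α * (y₁ * y₁) := by
    have h := 𝒟.leibniz_even hg₁ f1inv
    rw [hDg₁, hDfi] at h
    rw [hy₁, h, hβ₁, hΩ₁]
    linear_combination (norm := noncomm_ring) β*hfi1 - p₁*hpi1*(σ₁*f1inv)
      - g₁*(cfi α)*(g₁*f1inv) - (cg α)*(f1inv*(g₁*f1inv))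
  have G3A : 𝒟.D (𝒟.D β₁) = 𝒟.D y₁ - 𝒟.D α * (β₁ * y₁)
      + α * (𝒟.D β₁ * y₁ - β₁ * 𝒟.D y₁) := by
    have h1 := congrArg (fun x => 𝒟.D x) G1A
    simp only [map_sub] at h1
    rw [𝒟.leibniz_odd hα (β₁ * y₁), 𝒟.leibniz_odd hβ₁1 y₁] at h1
    linear_combination (norm := noncomm_ring) h1
  have A_C3 := gs3 (hp := cp) (hy := cy) (hda := cda) (hdb := cdb) (haa := haa)
    (hbb := hbb) (hab := hab) (hac := hacβ) (hbc := hbcβ) (G1 := G1A) (G2 := G2A) (G3 := G3A)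
  refine ⟨A_C3, ?_⟩
  have h1ab0 : (1 + α * β₁) ∈ S.A0 := Submodule.add_mem _ h1mem (S.mul_mem11 hα hβ₁1)
  have GDwA : 𝒟.D (1 - α * β₁) = α * 𝒟.D β₁ - 𝒟.D α * β₁ := by
    rw [map_sub, hD1, 𝒟.leibniz_odd hα β₁]; noncomm_ring
  have GDuA : 𝒟.D ((1 + α * β₁) * (𝒟.D α * 𝒟.D β₁ - p₁ ^ 2))
      = (𝒟.D α * β₁ - α * 𝒟.D β₁) * (𝒟.D α * 𝒟.D β₁ - p₁ ^ 2)
        + (1 + α * β₁) * (𝒟.D (𝒟.D α) * 𝒟.D β₁ + 𝒟.D α * 𝒟.D (𝒟.D β₁)) := by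
    have hDab : 𝒟.D (1 + α * β₁) = 𝒟.D α * β₁ - α * 𝒟.D β₁ := by
      rw [map_add, hD1, 𝒟.leibniz_odd hα β₁]; noncomm_ring
    have hDp2 : 𝒟.D (p₁ ^ 2) = 0 := by
      rw [sq, 𝒟.leibniz_even hp₁ p₁, hDp₁]; simp
    have hDv : 𝒟.D (𝒟.D α * 𝒟.D β₁ - p₁ ^ 2)
        = 𝒟.D (𝒟.D α) * 𝒟.D β₁ + 𝒟.D α * 𝒟.D (𝒟.D β₁) := by
      rw [map_sub, 𝒟.leibniz_even hda0 (𝒟.D β₁), hDp2, sub_zero]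
    rw [𝒟.leibniz_even h1ab0 (𝒟.D α * 𝒟.D β₁ - p₁ ^ 2), hDab, hDv]
  have A_C1 := gsC1 (hp := cp) (hda := cda) (hdb := cdb) (haa := haa) (hbb := hbb)
    (hab := hab) (hac := hacβ) (hbc := hbcβ) (haax := haax) (hbax := hbax)
    (Ga1 := hα₁) (GDu := GDuA) (C3 := A_C3)
  have A_C2 := gsC2 (hp := cp) (hda := cda) (hdb := cdb) (haa := haa) (hbb := hbb)
    (hab := hab) (Ga1 := hα₁)
  have A_C4 := gsC4 (hp := cp) (hda := cda) (hdb := cdb) (haa := haa) (hbb := hbb)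
    (hab := hab) (hac := hacβ) (hbc := hbcβ) (C3 := A_C3)
  have A_C5 := gsC5 (hda := cda) (hdb := cdb) (GDw := GDwA)
  have A_C6 : α * β₁ + β₁ * α = 0 := by rw [hab]; exact neg_add_cancel _
  -- transfer to polynomials
  have P_C1 : (C (𝒟.D ((1 + α * β₁) * (𝒟.D α * 𝒟.D β₁ - p₁ ^ 2))) : Polynomial A)
      = C (𝒟.D α) * C β - C α₁ * C (𝒟.D β₁) := by
    rw [A_C1]; simp only [_root_.map_sub, _root_.map_mul]
  have P_C2 : -(C (𝒟.D (𝒟.D α)) : Polynomial A)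
      + ((1 + C α * C β₁) * (C (𝒟.D α) * C (𝒟.D β₁) - C p₁ ^ 2)) * C α
      - C α₁ * (1 - C α * C β₁) = 0 := by
    simpa only [_root_.map_add, _root_.map_sub, _root_.map_mul, _root_.map_neg,
      _root_.map_one, _root_.map_pow, _root_.map_zero] using congrArg (C (R := A)) A_C2
  have P_C4 : -(C (𝒟.D (𝒟.D β₁)) : Polynomial A)
      + (1 - C α * C β₁) * C β
      - C β₁ * ((1 + C α * C β₁) * (C (𝒟.D α) * C (𝒟.D β₁) - C p₁ ^ 2)) = 0 := by
    simpa only [_root_.map_add, _root_.map_sub, _root_.map_mul, _root_.map_neg,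
      _root_.map_one, _root_.map_pow, _root_.map_zero] using congrArg (C (R := A)) A_C4
  have P_C5 : (C (𝒟.D (1 - α * β₁)) : Polynomial A)
      - C (𝒟.D β₁) * C α + C β₁ * C (𝒟.D α) = 0 := by
    simpa only [_root_.map_add, _root_.map_sub, _root_.map_mul, _root_.map_neg,
      _root_.map_one, _root_.map_pow, _root_.map_zero] using congrArg (C (R := A)) A_C5
  have P_C6 : (C α : Polynomial A) * C β₁ + C β₁ * C α = 0 := by
    simpa only [_root_.map_add, _root_.map_mul, _root_.map_zero]
      using congrArg (C (R := A)) A_C6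
  have htX : ∀ q : Polynomial A, X * q = q * X := fun q => X_mul
  have final := darboux_matrix (X : Polynomial A) (C p₁) (C α) (C β₁) (C β) (C α₁)
    (C (𝒟.D α)) (C (𝒟.D β₁))
    (C (𝒟.D ((1 + α * β₁) * (𝒟.D α * 𝒟.D β₁ - p₁ ^ 2))))
    (C (𝒟.D (𝒟.D α))) (C (𝒟.D (𝒟.D β₁))) (C (𝒟.D (1 - α * β₁)))
    htX P_C1 P_C2 P_C4 P_C5 P_C6
  have hf0' : (fun x => 𝒟.D x) (0:A) = 0 := by simp
  have hfadd' : ∀ x y : A, (fun x => 𝒟.D x) (x + y) = (fun x => 𝒟.D x) x + (fun x => 𝒟.D x) y :=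
    fun x y => by simp
  have hfneg' : ∀ x : A, (fun x => 𝒟.D x) (-x) = -((fun x => 𝒟.D x) x) := fun x => by simp
  simp only [E1poly, Lpoly]
  rw [E1map hf0' hD1 hfadd' hfneg']
  exact final
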